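/- Let T be a positive contraction on ℓ_2 such that ‖T‖ = 1 and there exists a family (u_r)_{r∈J} of norming vectors for T, indexed by a set J ⊆ ℤ₊, with u_r positive, ‖u_r‖ = 1 for every r ∈ J, and ⋃_{r∈J} Supp(u_r) = ℤ₊. Then T is a point of continuity of the identity map from (𝒫₁(ℓ_2), WOT) to (𝒫₁(ℓ_2), SOT). -/

import Mathlib

open scoped ENNReal

noncomputable section

/-- The Hilbert space `ℓ₂` of square-summable complex sequences. -/
abbrev L2 := lp (fun _ : ℕ => ℂ) 2

/-- A vector of `ℓ₂` is positive if all its coordinates are nonnegative reals. -/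
def PosVec (x : L2) : Prop := ∀ n : ℕ, 0 ≤ (x n).re ∧ (x n).im = 0

/-- The set `𝒫₁(ℓ₂)` of positive contractions on `ℓ₂`. -/
def P1 : Set (L2 →L[ℂ] L2) :=
  {T | (∀ x : L2, PosVec x → PosVec (T x)) ∧ ‖T‖ ≤ 1}

/-- The strong operator topology (pointwise norm-convergence). -/
def sot : TopologicalSpace (L2 →L[ℂ] L2) :=
  TopologicalSpace.induced (fun T => (fun x : L2 => T x)) Pi.topologicalSpace

/-- The weak operator topology (pointwise weak convergence). -/
def wot : TopologicalSpace (L2 →L[ℂ] L2) :=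
  TopologicalSpace.induced
    (fun T => (fun q : L2 × L2 => (inner ℂ q.1 (T q.2) : ℂ)))
    Pi.topologicalSpace

/-- The dual strong operator topology `SOT_*` (pointwise norm-convergence of the adjoints). -/
def sotStar : TopologicalSpace (L2 →L[ℂ] L2) :=
  TopologicalSpace.induced
    (fun T => (fun x : L2 => (ContinuousLinearMap.adjoint T) x))
    Pi.topologicalSpace

/-- The `SOT*` topology, the join of `SOT` and `SOT_*`.  (In the order on
`TopologicalSpace`, `⊓` is the coarsest topology refining both.) -/
def sotSStar : TopologicalSpace (L2 →L[ℂ] L2) := sot ⊓ sotStar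

/-- Restriction of a topology to a subset. -/
def rtop {α : Type*} (s : Set α) (t : TopologicalSpace α) : TopologicalSpace ↥s :=
  t.induced Subtype.val

/-- Two topologies on the same set are similar if they have the same dense sets. -/
def SimilarTop {Y : Type*} (t t' : TopologicalSpace Y) : Prop :=
  ∀ A : Set Y, @Dense Y t A ↔ @Dense Y t' A

open Filter Topology

section helpers
lemma l2NormSq (x : L2) : ‖x‖^2 = ∑' m, ‖x m‖^2 := by
  have := lp.norm_rpow_eq_tsum (p := 2) (E := fun _ : ℕ => ℂ) (by norm_num) x
  simpa [Real.rpow_natCast] using this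

lemma l2Summable (x : L2) : Summable (fun m => ‖x m‖^2) := by
  have := (lp.memℓp x).summable (p := 2) (by norm_num)
  simpa [Real.rpow_natCast] using this

lemma normSqTendsto {α : Type*} {l : Filter α} {f : α → L2}
    (h : Tendsto (fun i => ‖f i‖^2) l (𝓝 0)) : Tendsto f l (𝓝 0) := by
  have hn : Tendsto (fun i => ‖f i‖) l (𝓝 0) := by
    have := (Real.continuous_sqrt.tendsto 0).comp h
    simpa [Function.comp_def, Real.sqrt_sq (norm_nonneg _)] using this
  exact tendsto_zero_iff_norm_tendsto_zero.2 hn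

lemma keyIneq (x y : L2) (hx : ‖x‖ ≤ 1) (hy : ‖y‖ = 1) :
    ‖x - y‖^2 ≤ 2 * (inner ℂ y (y - x) : ℂ).re := by
  have h := @norm_sub_sq ℂ L2 _ _ _ x y
  have hyy : (inner ℂ y y : ℂ).re = ‖y‖^2 := by
    have := @inner_self_eq_norm_sq ℂ L2 _ _ _ y
    simpa [RCLike.re_to_complex] using this
  have h2 : (inner ℂ y (y - x) : ℂ).re = ‖y‖^2 - (inner ℂ y x : ℂ).re := by
    rw [inner_sub_right, Complex.sub_re, hyy]
  have h3 : (inner ℂ x y : ℂ).re = (inner ℂ y x : ℂ).re := by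
    rw [← inner_conj_symm]; exact Complex.conj_re _
  have hx2 : ‖x‖^2 ≤ 1 := by nlinarith [norm_nonneg x]
  rw [h2, hy]
  simp only [RCLike.re_to_complex] at h
  rw [h3] at h
  nlinarith

lemma cnormRe (c : ℂ) (h : c.im = 0) (h2 : 0 ≤ c.re) : ‖c‖ = c.re := by
  rw [Complex.norm_def, Complex.normSq_apply, h]
  simpa using Real.sqrt_mul_self h2

lemma sqNormAddLe (z w : ℂ) : ‖z + w‖^2 ≤ 2*‖z‖^2 + 2*‖w‖^2 := by
  have h := norm_add_le z w
  nlinarith [sq_nonneg (‖z‖ - ‖w‖), norm_nonneg (z+w), norm_nonneg z, norm_nonneg w]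

lemma sqNormSubLe (z w : ℂ) : ‖z - w‖^2 ≤ 2*‖z‖^2 + 2*‖w‖^2 := by
  have h := norm_sub_le z w
  nlinarith [sq_nonneg (‖z‖ - ‖w‖), norm_nonneg (z-w), norm_nonneg z, norm_nonneg w]

/-- basis vectors -/
def eV (n : ℕ) : L2 := lp.single 2 n (1:ℂ)

lemma eV_apply (n m : ℕ) : eV n m = if m = n then 1 else 0 := by
  rw [eV, lp.single_apply]
  by_cases h : m = n
  · subst h; simp
  · simp [h]

lemma eV_pos (n : ℕ) : PosVec (eV n) := by
  intro m
  rw [eV_apply]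
  split_ifs <;> simp
end helpers


set_option maxHeartbeats 2000000 in
/-- Let `T` be a positive contraction on `ℓ₂` with `‖T‖ = 1` such that
there exists a family `(u_r)_{r ∈ J}` (indexed by `J ⊆ ℤ₊`) of norming vectors for `T`,
each positive and of norm `1`, whose supports cover `ℤ₊`.  Then `T` is a point of
continuity of the identity map from `(𝒫₁(ℓ₂), WOT)` to `(𝒫₁(ℓ₂), SOT)`. -/
theorem norming_family_implies_continuity_point_wot_sot (T : ↥P1)
    (hTnorm : ‖(T : L2 →L[ℂ] L2)‖ = 1)
    (J : Set ℕ) (u : ℕ → L2)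
    (hpos : ∀ r ∈ J, PosVec (u r))
    (hunit : ∀ r ∈ J, ‖u r‖ = 1)
    (hnorming : ∀ r ∈ J,
      ‖(T : L2 →L[ℂ] L2) (u r)‖ = ‖(T : L2 →L[ℂ] L2)‖ * ‖u r‖)
    (hcover : ∀ n : ℕ, ∃ r ∈ J, u r n ≠ 0) :
    @ContinuousAt ↥P1 ↥P1 (rtop P1 wot) (rtop P1 sot) id T := by
    classical
  set F := @nhds ↥P1 (rtop P1 wot) T with hF
  have hW : ∀ q : L2 × L2, Tendsto (fun S : ↥P1 => (inner ℂ q.1 ((S : L2 →L[ℂ] L2) q.2) : ℂ)) F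
      (𝓝 (inner ℂ q.1 ((T : L2 →L[ℂ] L2) q.2))) := by
    intro q
    have h1 : rtop P1 wot = TopologicalSpace.induced
        (fun S : ↥P1 => (fun q : L2 × L2 => (inner ℂ q.1 ((S : L2 →L[ℂ] L2) q.2) : ℂ)))
        Pi.topologicalSpace := by
      rw [rtop, wot, induced_compose]; rfl
    have h2 : Tendsto (fun S : ↥P1 => (fun q : L2 × L2 => (inner ℂ q.1 ((S : L2 →L[ℂ] L2) q.2) : ℂ)))
        F (𝓝 (fun q : L2 × L2 => (inner ℂ q.1 ((T : L2 →L[ℂ] L2) q.2) : ℂ))) := by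
      rw [hF, h1, nhds_induced]
      exact tendsto_comap
    exact (tendsto_pi_nhds.1 h2) q
  have hSnorm : ∀ S : ↥P1, ‖(S : L2 →L[ℂ] L2)‖ ≤ 1 := fun S => S.2.2
  have hSpos : ∀ S : ↥P1, ∀ x : L2, PosVec x → PosVec ((S : L2 →L[ℂ] L2) x) := fun S => S.2.1
  -- coordinate convergence
  have hCoord : ∀ (x : L2) (m : ℕ),
      Tendsto (fun S : ↥P1 => ((S : L2 →L[ℂ] L2) x) m) F (𝓝 (((T : L2 →L[ℂ] L2) x) m)) := by
    intro x m
    have h := hW (eV m, x)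
    simpa [eV, lp.inner_single_left, RCLike.inner_apply, map_one, one_mul] using h
  -- Step A : norm convergence on norming vectors
  have hA : ∀ r ∈ J,
      Tendsto (fun S : ↥P1 => (S : L2 →L[ℂ] L2) (u r) - (T : L2 →L[ℂ] L2) (u r)) F (𝓝 0) := by
    intro r hr
    set Tu := (T : L2 →L[ℂ] L2) (u r) with hTu
    have hTu1 : ‖Tu‖ = 1 := by rw [hTu, hnorming r hr, hTnorm, hunit r hr]; ring
    apply normSqTendsto
    have hφ : Tendsto (fun S : ↥P1 => 2 * (inner ℂ Tu (Tu - (S : L2 →L[ℂ] L2) (u r)) : ℂ).re)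
        F (𝓝 0) := by
      have h := hW (Tu, u r)
      have h2 : Tendsto (fun S : ↥P1 => (inner ℂ Tu (Tu - (S : L2 →L[ℂ] L2) (u r)) : ℂ)) F (𝓝 0) := by
        have h3 := (tendsto_const_nhds (x := (inner ℂ Tu Tu : ℂ)) (f := F)).sub h
        simpa [inner_sub_right, ← hTu] using h3
      have h4 := (Complex.continuous_re.tendsto 0).comp h2
      have h5 : Tendsto (fun S : ↥P1 => (inner ℂ Tu (Tu - (S : L2 →L[ℂ] L2) (u r)) : ℂ).re) F (𝓝 0) := by
        simpa [Function.comp_def] using h4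
      simpa using h5.const_mul 2
    refine squeeze_zero (fun S => sq_nonneg _) (fun S => ?_) hφ
    refine keyIneq _ _ ?_ hTu1
    calc ‖(S : L2 →L[ℂ] L2) (u r)‖ ≤ ‖(S : L2 →L[ℂ] L2)‖ * ‖u r‖ :=
          (S : L2 →L[ℂ] L2).le_opNorm (u r)
      _ ≤ 1 := by rw [hunit r hr, mul_one]; exact hSnorm S
  -- Step C : convergence on basis vectors
  have hC : ∀ n : ℕ,
      Tendsto (fun S : ↥P1 => (S : L2 →L[ℂ] L2) (eV n) - (T : L2 →L[ℂ] L2) (eV n)) F (𝓝 0) := by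
    intro n
    obtain ⟨r, hr, hurn⟩ := hcover n
    set Tu := (T : L2 →L[ℂ] L2) (u r) with hTu
    set Te := (T : L2 →L[ℂ] L2) (eV n) with hTe
    set a := ((u r) n).re with ha
    have him : ((u r) n).im = 0 := (hpos r hr n).2
    have ha0 : 0 < a := by
      rcases (hpos r hr n).1.lt_or_eq with h | h
      · exact h
      · exfalso; apply hurn; apply Complex.ext
        · simp [← h]
        · simp [him]
    -- domination
    have hdom : ∀ S : ↥P1, ∀ m : ℕ,
        a^2 * ‖((S : L2 →L[ℂ] L2) (eV n)) m‖^2 ≤ ‖((S : L2 →L[ℂ] L2) (u r)) m‖^2 := by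
      intro S m
      have hposE := hSpos S _ (eV_pos n)
      have hposU := hSpos S _ (hpos r hr)
      have hv : PosVec (u r - (a:ℂ) • eV n) := by
        intro m'
        have hc : (u r - (a:ℂ) • eV n) m' = u r m' - (a:ℂ) * (eV n) m' := by
          simp only [lp.coeFn_sub, lp.coeFn_smul, Pi.sub_apply, Pi.smul_apply, smul_eq_mul]
        rw [hc, eV_apply]
        by_cases h : m' = n
        · subst h
          constructor
          · simp [Complex.sub_re, ha]
          · simp [Complex.sub_im, him]
        · simpa [h] using hpos r hr m'
      have h2 : PosVec ((S : L2 →L[ℂ] L2) (u r) - (a:ℂ) • (S : L2 →L[ℂ] L2) (eV n)) := by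
        have := hSpos S _ hv
        rwa [map_sub, map_smul] at this
      have e1 := h2 m
      have hc2 : ((S : L2 →L[ℂ] L2) (u r) - (a:ℂ) • (S : L2 →L[ℂ] L2) (eV n)) m
          = ((S : L2 →L[ℂ] L2) (u r)) m - (a:ℂ) * ((S : L2 →L[ℂ] L2) (eV n)) m := by
        simp only [lp.coeFn_sub, lp.coeFn_smul, Pi.sub_apply, Pi.smul_apply, smul_eq_mul]
      rw [hc2] at e1
      have hz := hposE m
      have hw := hposU m
      rw [cnormRe _ hz.2 hz.1, cnormRe _ hw.2 hw.1]
      have hre : a * (((S : L2 →L[ℂ] L2) (eV n)) m).re ≤ (((S : L2 →L[ℂ] L2) (u r)) m).re := by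
        have h3 := e1.1
        simp only [Complex.sub_re, Complex.mul_re, Complex.ofReal_re, Complex.ofReal_im,
          zero_mul, sub_zero] at h3
        linarith
      nlinarith [hz.1, hw.1, mul_nonneg ha0.le hz.1]
    apply normSqTendsto
    rw [Metric.tendsto_nhds]
    intro ε hε
    have hta : Tendsto (fun M : ℕ => ∑' k, ‖Tu (k + M)‖^2) atTop (𝓝 0) :=
      tendsto_sum_nat_add (fun j => ‖Tu j‖^2)
    have htb : Tendsto (fun M : ℕ => ∑' k, ‖Te (k + M)‖^2) atTop (𝓝 0) :=
      tendsto_sum_nat_add (fun j => ‖Te j‖^2)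
    obtain ⟨M, hM1, hM2⟩ : ∃ M : ℕ, (∑' k, ‖Tu (k + M)‖^2) < a^2 * ε/16
        ∧ (∑' k, ‖Te (k + M)‖^2) < ε/8 := by
      have h1 := hta.eventually (gt_mem_nhds (show (0:ℝ) < a^2 * ε/16 by positivity))
      have h2 := htb.eventually (gt_mem_nhds (show (0:ℝ) < ε/8 by positivity))
      exact (h1.and h2).exists
    have ev1 : ∀ᶠ S : ↥P1 in F, ‖(S : L2 →L[ℂ] L2) (u r) - Tu‖^2 < a^2 * ε/16 := by
      have h := (hA r hr).norm.pow 2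
      simp only [norm_zero] at h
      have h' : Tendsto (fun S : ↥P1 => ‖(S : L2 →L[ℂ] L2) (u r) - Tu‖^2) F (𝓝 0) := by
        simpa using h
      exact h'.eventually (gt_mem_nhds (by positivity))
    have ev2 : ∀ᶠ S : ↥P1 in F,
        ∑ m ∈ Finset.range M, ‖((S : L2 →L[ℂ] L2) (eV n)) m - Te m‖^2 < ε/4 := by
      have h : Tendsto (fun S : ↥P1 =>
          ∑ m ∈ Finset.range M, ‖((S : L2 →L[ℂ] L2) (eV n)) m - Te m‖^2) F (𝓝 0) := by
        have hterm : ∀ m ∈ Finset.range M,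
            Tendsto (fun S : ↥P1 => ‖((S : L2 →L[ℂ] L2) (eV n)) m - Te m‖^2) F (𝓝 0) := by
          intro m _
          have h2 : Tendsto (fun S : ↥P1 => ((S : L2 →L[ℂ] L2) (eV n)) m - Te m) F (𝓝 0) := by
            simpa [← hTe] using (hCoord (eV n) m).sub_const (Te m)
          have h3 := h2.norm.pow 2
          simpa using h3
        have := tendsto_finset_sum (Finset.range M) hterm
        simpa using this
      exact h.eventually (gt_mem_nhds (by positivity))
    filter_upwards [ev1, ev2] with S h1 h2
    rw [Real.dist_eq, sub_zero, abs_of_nonneg (sq_nonneg _)]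
    set Se := (S : L2 →L[ℂ] L2) (eV n) with hSe
    set Su := (S : L2 →L[ℂ] L2) (u r) with hSu
    have hcoeD : ∀ m, (Se - Te) m = Se m - Te m := fun m => by simp [lp.coeFn_sub]
    have hcoeU : ∀ m, (Su - Tu) m = Su m - Tu m := fun m => by simp [lp.coeFn_sub]
    have hsplit : ‖Se - Te‖^2
        = ∑ m ∈ Finset.range M, ‖(Se - Te) m‖^2 + ∑' k, ‖(Se - Te) (k + M)‖^2 := by
      rw [l2NormSq]
      exact (Summable.sum_add_tsum_nat_add M (l2Summable _)).symm
    have hsummd : Summable (fun k => ‖(Se - Te) (k + M)‖^2) :=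
      (summable_nat_add_iff M).2 (l2Summable _)
    have hsum1 : Summable (fun k => ‖(Su - Tu) (k + M)‖^2) :=
      (summable_nat_add_iff M).2 (l2Summable _)
    have hsum2 : Summable (fun k => ‖Tu (k + M)‖^2) :=
      (summable_nat_add_iff M).2 (l2Summable _)
    have hsum3 : Summable (fun k => ‖Te (k + M)‖^2) :=
      (summable_nat_add_iff M).2 (l2Summable _)
    have hptwise : ∀ k, a^2 * ‖(Se - Te) (k + M)‖^2
        ≤ 4 * ‖(Su - Tu) (k + M)‖^2 + 4 * ‖Tu (k + M)‖^2 + (2*a^2) * ‖Te (k + M)‖^2 := by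
      intro k
      have hd := hdom S (k + M)
      rw [← hSe, ← hSu] at hd
      have e1 : ‖(Se - Te) (k + M)‖^2 ≤ 2*‖Se (k + M)‖^2 + 2*‖Te (k + M)‖^2 := by
        rw [hcoeD]; exact sqNormSubLe _ _
      have e2 : ‖Su (k + M)‖^2 ≤ 2*‖(Su - Tu) (k + M)‖^2 + 2*‖Tu (k + M)‖^2 := by
        have hh : Su (k + M) = (Su - Tu) (k + M) + Tu (k + M) := by
          rw [hcoeU]; ring
        rw [hh]
        exact sqNormAddLe _ _
      have e1' := mul_le_mul_of_nonneg_left e1 (sq_nonneg a)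
      nlinarith
    have htail : a^2 * (∑' k, ‖(Se - Te) (k + M)‖^2)
        ≤ 4 * ‖Su - Tu‖^2 + 4 * (∑' k, ‖Tu (k + M)‖^2) + (2*a^2) * (∑' k, ‖Te (k + M)‖^2) := by
      have hrhs : Summable (fun k => 4 * ‖(Su - Tu) (k + M)‖^2 + 4 * ‖Tu (k + M)‖^2
          + (2*a^2) * ‖Te (k + M)‖^2) :=
        ((hsum1.mul_left 4).add (hsum2.mul_left 4)).add (hsum3.mul_left (2*a^2))
      have h3 := Summable.tsum_le_tsum hptwise (hsummd.mul_left (a^2)) hrhs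
      rw [tsum_mul_left] at h3
      have h4 : (∑' k, (4 * ‖(Su - Tu) (k + M)‖^2 + 4 * ‖Tu (k + M)‖^2
          + (2*a^2) * ‖Te (k + M)‖^2))
          = 4 * (∑' k, ‖(Su - Tu) (k + M)‖^2) + 4 * (∑' k, ‖Tu (k + M)‖^2)
            + (2*a^2) * (∑' k, ‖Te (k + M)‖^2) := by
        rw [Summable.tsum_add ((hsum1.mul_left 4).add (hsum2.mul_left 4)) (hsum3.mul_left (2*a^2)),
          Summable.tsum_add (hsum1.mul_left 4) (hsum2.mul_left 4), tsum_mul_left, tsum_mul_left,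
          tsum_mul_left]
      rw [h4] at h3
      have h5 : (∑' k, ‖(Su - Tu) (k + M)‖^2) ≤ ‖Su - Tu‖^2 := by
        rw [l2NormSq]
        have h6 := Summable.sum_add_tsum_nat_add M (l2Summable (Su - Tu))
        have h7 : (0:ℝ) ≤ ∑ m ∈ Finset.range M, ‖(Su - Tu) m‖^2 :=
          Finset.sum_nonneg (fun m _ => sq_nonneg _)
        linarith
      linarith
    -- finish
    have hfin : ∑ m ∈ Finset.range M, ‖(Se - Te) m‖^2 < ε/4 := by
      have : ∑ m ∈ Finset.range M, ‖(Se - Te) m‖^2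
          = ∑ m ∈ Finset.range M, ‖Se m - Te m‖^2 := by
        apply Finset.sum_congr rfl
        intro m _
        rw [hcoeD]
      rw [this]
      exact h2
    have htail2 : (∑' k, ‖(Se - Te) (k + M)‖^2) < 3 * ε / 4 := by
      have hb : a^2 * (∑' k, ‖(Se - Te) (k + M)‖^2) < a^2 * (3 * ε / 4) := by
        calc a^2 * (∑' k, ‖(Se - Te) (k + M)‖^2)
            ≤ 4 * ‖Su - Tu‖^2 + 4 * (∑' k, ‖Tu (k + M)‖^2)
              + (2*a^2) * (∑' k, ‖Te (k + M)‖^2) := htail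
          _ < 4 * (a^2 * ε/16) + 4 * (a^2 * ε/16) + (2*a^2) * (ε/8) := by
              have hTe2 : (2*a^2) * (∑' k, ‖Te (k + M)‖^2) ≤ (2*a^2) * (ε/8) := by
                apply mul_le_mul_of_nonneg_left hM2.le (by positivity)
              have hSuTu : 4 * ‖Su - Tu‖^2 < 4 * (a^2 * ε/16) := by linarith
              have hTu2 : 4 * (∑' k, ‖Tu (k + M)‖^2) < 4 * (a^2 * ε/16) := by linarith
              linarith
          _ = a^2 * (3 * ε / 4) := by ring
      exact lt_of_mul_lt_mul_left hb (by positivity)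
    rw [hsplit]
    linarith
  -- Step D : convergence everywhere
  have hgoal : ∀ x : L2,
      Tendsto (fun S : ↥P1 => (S : L2 →L[ℂ] L2) x) F (𝓝 ((T : L2 →L[ℂ] L2) x)) := by
    intro x
    rw [Metric.tendsto_nhds]
    intro ε hε
    have hx : HasSum (fun m => lp.single 2 m (x m)) x := lp.hasSum_single ENNReal.ofNat_ne_top x
    obtain ⟨s, hs⟩ : ∃ s : Finset ℕ, ‖x - ∑ m ∈ s, lp.single 2 m (x m)‖ < ε/4 := by
      have := Metric.tendsto_nhds.1 hx (ε/4) (by positivity)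
      obtain ⟨s, hs⟩ := this.exists
      exact ⟨s, by rwa [dist_eq_norm, norm_sub_rev] at hs⟩
    set y : L2 := ∑ m ∈ s, lp.single 2 m (x m) with hy
    have hsingle : ∀ m : ℕ, lp.single 2 m (x m) = (x m) • eV m := by
      intro m
      apply lp.ext
      funext j
      rw [lp.coeFn_smul]
      simp only [Pi.smul_apply, smul_eq_mul]
      rw [lp.single_apply, eV_apply]
      by_cases h : j = m
      · subst h; simp
      · simp [h]
    have hSy : ∀ S : ↥P1, (S : L2 →L[ℂ] L2) y - (T : L2 →L[ℂ] L2) y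
        = ∑ m ∈ s, (x m) • ((S : L2 →L[ℂ] L2) (eV m) - (T : L2 →L[ℂ] L2) (eV m)) := by
      intro S
      rw [hy]
      rw [map_sum, map_sum]
      rw [← Finset.sum_sub_distrib]
      apply Finset.sum_congr rfl
      intro m _
      rw [hsingle m, map_smul, map_smul, smul_sub]
    have hty : Tendsto (fun S : ↥P1 =>
        (S : L2 →L[ℂ] L2) y - (T : L2 →L[ℂ] L2) y) F (𝓝 0) := by
      have hterm : ∀ m ∈ s, Tendsto (fun S : ↥P1 =>
          (x m) • ((S : L2 →L[ℂ] L2) (eV m) - (T : L2 →L[ℂ] L2) (eV m))) F (𝓝 0) := by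
        intro m _
        have := (hC m).const_smul (x m)
        simpa using this
      have hsum := tendsto_finset_sum s hterm
      simp only [Finset.sum_const_zero] at hsum
      exact Tendsto.congr (fun S => (hSy S).symm) hsum
    have hty' : Tendsto (fun S : ↥P1 =>
        ‖(S : L2 →L[ℂ] L2) y - (T : L2 →L[ℂ] L2) y‖) F (𝓝 0) := by
      simpa using hty.norm
    have ev := hty'.eventually (gt_mem_nhds (show (0:ℝ) < ε/2 by positivity))
    filter_upwards [ev] with S hS
    rw [dist_eq_norm]
    have hdecomp : (S : L2 →L[ℂ] L2) x - (T : L2 →L[ℂ] L2) x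
        = (S : L2 →L[ℂ] L2) (x - y) + ((S : L2 →L[ℂ] L2) y - (T : L2 →L[ℂ] L2) y)
          + (T : L2 →L[ℂ] L2) (y - x) := by
      rw [map_sub, map_sub]
      abel
    rw [hdecomp]
    have b1 : ‖(S : L2 →L[ℂ] L2) (x - y)‖ ≤ ‖x - y‖ := by
      calc ‖(S : L2 →L[ℂ] L2) (x - y)‖ ≤ ‖(S : L2 →L[ℂ] L2)‖ * ‖x - y‖ :=
            (S : L2 →L[ℂ] L2).le_opNorm _
        _ ≤ 1 * ‖x - y‖ := mul_le_mul_of_nonneg_right (hSnorm S) (norm_nonneg _)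
        _ = ‖x - y‖ := one_mul _
    have b3 : ‖(T : L2 →L[ℂ] L2) (y - x)‖ ≤ ‖y - x‖ := by
      calc ‖(T : L2 →L[ℂ] L2) (y - x)‖ ≤ ‖(T : L2 →L[ℂ] L2)‖ * ‖y - x‖ :=
            (T : L2 →L[ℂ] L2).le_opNorm _
        _ = ‖y - x‖ := by rw [hTnorm, one_mul]
    have hyx : ‖y - x‖ < ε/4 := by rwa [norm_sub_rev]
    calc ‖(S : L2 →L[ℂ] L2) (x - y) + ((S : L2 →L[ℂ] L2) y - (T : L2 →L[ℂ] L2) y)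
          + (T : L2 →L[ℂ] L2) (y - x)‖
        ≤ ‖(S : L2 →L[ℂ] L2) (x - y) + ((S : L2 →L[ℂ] L2) y - (T : L2 →L[ℂ] L2) y)‖
          + ‖(T : L2 →L[ℂ] L2) (y - x)‖ := norm_add_le _ _
      _ ≤ ‖(S : L2 →L[ℂ] L2) (x - y)‖ + ‖(S : L2 →L[ℂ] L2) y - (T : L2 →L[ℂ] L2) y‖
          + ‖(T : L2 →L[ℂ] L2) (y - x)‖ := by
            have := norm_add_le ((S : L2 →L[ℂ] L2) (x - y))
              ((S : L2 →L[ℂ] L2) y - (T : L2 →L[ℂ] L2) y)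
            linarith
      _ < ε/4 + ε/2 + ε/4 := by
            have := lt_of_le_of_lt b1 hs
            have := lt_of_le_of_lt b3 hyx
            linarith
      _ = ε := by ring
  -- conclude
  have h1 : rtop P1 sot = TopologicalSpace.induced
      (fun S : ↥P1 => (fun x : L2 => (S : L2 →L[ℂ] L2) x)) Pi.topologicalSpace := by
    rw [rtop, sot, induced_compose]; rfl
  show Tendsto id F (@nhds _ (rtop P1 sot) T)
  rw [h1, nhds_induced, tendsto_comap_iff, tendsto_pi_nhds]
  intro x
  exact hgoal x
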